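/- arXiv:2009.06427 — 2 statements merged into one kernel-verified Lean document; each statement's English description precedes it below -/
import Mathlib

section
/- The operators ξ_{i,r}, x⁺_{i,r}, x⁻_{i,r} on V satisfy the defining relations of the Yangian Y_ħ(sl_n): for all 1 ≤ i, j ≤ n−1 and all integers r, s ≥ 0, (Y1) [ξ_{i,r}, ξ_{j,s}] = 0; (Y2) [ξ_{i,0}, x^±_{j,s}] = ±a_{ij}·x^±_{j,s}; (Y3) [ξ_{i,r+1}, x^±_{j,s}] − [ξ_{i,r}, x^±_{j,s+1}] = ±(ħ·a_{ij}/2)·(ξ_{i,r} x^±_{j,s} + x^±_{j,s} ξ_{i,r}); (Y4) [x^±_{i,r+1}, x^±_{j,s}] − [x^±_{i,r}, x^±_{j,s+1}] = ±(ħ·a_{ij}/2)·(x^±_{i,r} x^±_{j,s} + x^±_{j,s} x^±_{i,r}); (Y5) [x⁺_{i,r}, x⁻_{j,s}] = δ_{ij}·ξ_{i,r+s}. Moreover, the vector Ω = |(1, 2, …, m)⟩ satisfies x⁺_{i,r}Ω = 0 for all i, r, and ξ_{i,r}Ω = δ_{i,m}·a^r·Ω for all i, r. -/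
noncomputable section

open scoped Classical

namespace YangianSlnFund

/-- The index set: strictly increasing `m`-tuples with entries in `{1, …, n}`
(realized as strictly monotone maps `Fin m → Fin n`). -/
abbrev Idx (n m : ℕ) := {p : Fin m → Fin n // StrictMono p}

noncomputable instance (n m : ℕ) : Fintype (Idx n m) := Fintype.ofFinite _

/-- The (1-based) value of the tuple `p` at the (0-based) position `k`. -/
def pv {n m : ℕ} (p : Idx n m) (k : Fin m) : ℕ := (p.val k).val + 1

/-- `i` occurs among the entries of `p`. -/
def Occurs {n m : ℕ} (p : Idx n m) (i : ℕ) : Prop := ∃ k : Fin m, pv p k = i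

/-- `b_{i,k} = a + (ħ/2)(m + i − 2k)`. -/
def bval (m : ℕ) (hbar a : ℂ) (i k : ℕ) : ℂ :=
  a + (hbar / 2) * ((m : ℂ) + (i : ℂ) - 2 * (k : ℂ))

/-- Matrix of `ξ_{i,r}` in the basis `{|p⟩}`. -/
def xiMat (n m : ℕ) (hbar a : ℂ) (i r : ℕ) : Matrix (Idx n m) (Idx n m) ℂ :=
  fun q p =>
    if q = p then
      (∑ k : Fin m,
          if pv p k = i ∧ ¬ Occurs p (i + 1) then (bval m hbar a i (k.val + 1)) ^ r else 0) -
        (∑ k : Fin m,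
          if pv p k = i + 1 ∧ ¬ Occurs p i then (bval m hbar a i (k.val + 1)) ^ r else 0)
    else 0

/-- Matrix of `x⁺_{i,r}`: it sends `|p⟩` with `p_k = i+1`, `i ∉ p`, to
`b_{i,k}^r |p′⟩` where `p′` replaces the entry `i+1` by `i`. -/
def xpMat (n m : ℕ) (hbar a : ℂ) (i r : ℕ) : Matrix (Idx n m) (Idx n m) ℂ :=
  fun q p =>
    ∑ k : Fin m,
      if pv p k = i + 1 ∧ ¬ Occurs p i ∧ pv q k = i ∧
          (∀ l : Fin m, l ≠ k → q.val l = p.val l) then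
        (bval m hbar a i (k.val + 1)) ^ r
      else 0

/-- Matrix of `x⁻_{i,r}`: it sends `|p⟩` with `p_k = i`, `i+1 ∉ p`, to
`b_{i,k}^r |p″⟩` where `p″` replaces the entry `i` by `i+1`. -/
def xmMat (n m : ℕ) (hbar a : ℂ) (i r : ℕ) : Matrix (Idx n m) (Idx n m) ℂ :=
  fun q p =>
    ∑ k : Fin m,
      if pv p k = i ∧ ¬ Occurs p (i + 1) ∧ pv q k = i + 1 ∧
          (∀ l : Fin m, l ≠ k → q.val l = p.val l) then
        (bval m hbar a i (k.val + 1)) ^ r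
      else 0

/-- The operator `ξ_{i,r}` on `V`. -/
def Xi (n m : ℕ) (hbar a : ℂ) (i r : ℕ) : Module.End ℂ (Idx n m → ℂ) :=
  Matrix.toLin' (xiMat n m hbar a i r)

/-- The operator `x⁺_{i,r}` on `V`. -/
def Xp (n m : ℕ) (hbar a : ℂ) (i r : ℕ) : Module.End ℂ (Idx n m → ℂ) :=
  Matrix.toLin' (xpMat n m hbar a i r)

/-- The operator `x⁻_{i,r}` on `V`. -/
def Xm (n m : ℕ) (hbar a : ℂ) (i r : ℕ) : Module.End ℂ (Idx n m → ℂ) :=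
  Matrix.toLin' (xmMat n m hbar a i r)

/-- The entries of the Cartan matrix of `sl_n`. -/
def cartan (i j : ℕ) : ℂ :=
  if i = j then 2 else if i + 1 = j ∨ j + 1 = i then -1 else 0

/-- The highest-weight tuple `(1, 2, …, m)`. -/
def pOmega (n m : ℕ) (h : m ≤ n) : Idx n m :=
  ⟨fun k => ⟨k.val, lt_of_lt_of_le k.isLt h⟩, fun a b hab => by
    simp only [Fin.mk_lt_mk]; exact hab⟩

/-- The highest-weight vector `Ω = |(1, …, m)⟩`. -/
def Omega (n m : ℕ) (h : m ≤ n) : Idx n m → ℂ := Pi.single (pOmega n m h) 1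

section Infra

variable {n m : ℕ}

lemma pv_inj {p : Idx n m} {k l : Fin m} (h : pv p k = pv p l) : k = l :=
  p.2.injective (Fin.ext (by simpa [pv] using h))

/-- `Mv p q v k`: `q` is obtained from `p` by replacing the entry `v+1`
(at position `k`) by `v`. -/
def Mv (p q : Idx n m) (v : ℕ) (k : Fin m) : Prop :=
  pv p k = v + 1 ∧ pv q k = v ∧ ∀ l, l ≠ k → q.val l = p.val l

lemma Mv.pos {p q : Idx n m} {v k} (h : Mv p q v k) : 1 ≤ v := by
  have := h.2.1; unfold pv at this; omega

lemma Mv.pv_eq {p q : Idx n m} {v k} (h : Mv p q v k) {l : Fin m} (hl : l ≠ k) :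
    pv q l = pv p l := by
  unfold pv; rw [h.2.2 l hl]

lemma Mv.not_occ_fst {p q : Idx n m} {v k} (h : Mv p q v k) : ¬ Occurs p v := by
  rintro ⟨l, hl⟩
  by_cases hlk : l = k
  · subst hlk; have := h.1; omega
  · have h2 : pv q l = v := by rw [h.pv_eq hlk, hl]
    exact hlk (pv_inj (h2.trans h.2.1.symm))

lemma Mv.not_occ_snd {p q : Idx n m} {v k} (h : Mv p q v k) : ¬ Occurs q (v + 1) := by
  rintro ⟨l, hl⟩
  by_cases hlk : l = k
  · subst hlk; have := h.2.1; omega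
  · have h2 : pv p l = v + 1 := by rw [← h.pv_eq hlk, hl]
    exact hlk (pv_inj (h2.trans h.1.symm))

lemma val_of_pv {p : Idx n m} {k : Fin m} {v : ℕ} (h : pv p k = v + 1) :
    p.val k = ⟨v, lt_of_le_of_lt (by unfold pv at h; omega : v ≤ (p.val k).val) (p.val k).isLt⟩ := by
  apply Fin.ext; unfold pv at h; simp; omega

lemma Mv.k_unique {p q q' : Idx n m} {v k k'} (h : Mv p q v k) (h' : Mv p q' v k') : k = k' :=
  pv_inj (h.1.trans h'.1.symm)

lemma Mv.k_unique' {p p' q : Idx n m} {v k k'} (h : Mv p q v k) (h' : Mv p' q v k') : k = k' :=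
  pv_inj (h.2.1.trans h'.2.1.symm)

lemma Mv.right_unique {p q q' : Idx n m} {v k k'} (h : Mv p q v k) (h' : Mv p' q' v k')
    (hp : p' = p) : q = q' := by
  subst hp
  have hk := h.k_unique h'
  subst hk
  apply Subtype.ext; funext l
  by_cases hl : l = k
  · subst hl
    have h1 := h.2.1; have h2 := h'.2.1
    apply Fin.ext; unfold pv at h1 h2; omega
  · rw [h.2.2 l hl, h'.2.2 l hl]

lemma Mv.left_unique {p p' q : Idx n m} {v k k'} (h : Mv p q v k) (h' : Mv p' q v k') :
    p = p' := by
  have hk := h.k_unique' h'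
  subst hk
  apply Subtype.ext; funext l
  by_cases hl : l = k
  · subst hl
    have h1 := h.1; have h2 := h'.1
    apply Fin.ext; unfold pv at h1 h2; omega
  · rw [← h.2.2 l hl, ← h'.2.2 l hl]

lemma strictMono_gap (f : Fin m → Fin n) (hf : StrictMono f) :
    ∀ d (k l : Fin m), k.val + d = l.val → (f k).val + d ≤ (f l).val := by
  intro d
  induction d with
  | zero => intro k l h; have : k = l := Fin.ext (by omega); subst this; omega
  | succ d ih =>
    intro k l h
    have hl1 : 1 ≤ l.val := by omega
    set l' : Fin m := ⟨l.val - 1, by omega⟩ with hl'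
    have h1 := ih k l' (by simp [hl']; omega)
    have h2 : f l' < f l := hf (by simp [Fin.lt_def, hl']; omega)
    rw [Fin.lt_def] at h2
    omega

/-- If `p` contains `v` at position `k` and `v+1` at position `l`, then `l = k+1`. -/
lemma gap_adj {p : Idx n m} {k l : Fin m} {v : ℕ} (hk : pv p k = v) (hl : pv p l = v + 1) :
    l.val = k.val + 1 := by
  unfold pv at hk hl
  have hkl : k.val < l.val := by
    rcases lt_trichotomy k l with h | h | h
    · exact h
    · subst h; omega
    · have := p.2 h; rw [Fin.lt_def] at this; omega
  have := strictMono_gap p.1 p.2 (l.val - k.val) k l (by omega)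
  omega

/-- Construct an element of `Idx n m` by updating one coordinate. -/
def moveTo (p : Idx n m) (k : Fin m) (w : Fin n)
    (hlt : ∀ l, l < k → p.val l < w) (hgt : ∀ l, k < l → w < p.val l) : Idx n m :=
  ⟨Function.update p.val k w, by
    intro s t hst
    rcases eq_or_ne s k with hs | hs <;> rcases eq_or_ne t k with ht | ht
    · subst hs; subst ht; exact absurd hst (lt_irrefl _)
    · subst hs; rw [Function.update_self, Function.update_of_ne ht]
      exact hgt t hst
    · subst ht; rw [Function.update_self, Function.update_of_ne hs]
      exact hlt s hst
    · rw [Function.update_of_ne hs, Function.update_of_ne ht]; exact p.2 hst⟩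

lemma occurs_iff {p : Idx n m} {v : ℕ} : Occurs p v ↔ ∃ k, pv p k = v := Iff.rfl

/-- Lower the entry `v+1` at position `k` to `v` (assuming `v` does not occur). -/
def mdown (p : Idx n m) (k : Fin m) (v : ℕ) (h1 : pv p k = v + 1) (h2 : ¬ Occurs p v)
    (h3 : 1 ≤ v) : Idx n m :=
  moveTo p k ⟨v - 1, by have : (p.val k).val = v := by unfold pv at h1; omega
                        have := (p.val k).isLt; omega⟩
    (by intro l hl
        have hval := p.2 hl
        rw [val_of_pv h1] at hval
        rw [Fin.lt_def] at hval ⊢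
        simp at hval ⊢
        have hne : pv p l ≠ v := fun hc => h2 ⟨l, hc⟩
        unfold pv at hne; omega)
    (by intro l hl
        have hval := p.2 hl
        rw [val_of_pv h1] at hval
        rw [Fin.lt_def] at hval ⊢
        simp at hval ⊢
        omega)

lemma Mv_mdown (p : Idx n m) (k : Fin m) (v : ℕ) (h1 : pv p k = v + 1) (h2 : ¬ Occurs p v)
    (h3 : 1 ≤ v) : Mv p (mdown p k v h1 h2 h3) v k := by
  refine ⟨h1, ?_, ?_⟩
  · unfold pv mdown moveTo
    simp [Function.update_self]; omega
  · intro l hl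
    unfold mdown moveTo
    simp [Function.update_of_ne hl]

/-- Raise the entry `v` at position `k` to `v+1` (assuming `v+1 ≤ n` and `v+1` does not occur). -/
def mup (p : Idx n m) (k : Fin m) (v : ℕ) (h1 : pv p k = v) (h2 : ¬ Occurs p (v + 1))
    (h3 : v < n) : Idx n m :=
  moveTo p k ⟨v, h3⟩
    (by intro l hl
        have hval := p.2 hl
        rw [Fin.lt_def] at hval ⊢
        unfold pv at h1
        simp
        omega)
    (by intro l hl
        have hval := p.2 hl
        rw [Fin.lt_def] at hval ⊢
        unfold pv at h1
        have hne : pv p l ≠ v + 1 := fun hc => h2 ⟨l, hc⟩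
        unfold pv at hne
        simp
        omega)

lemma Mv_mup (p : Idx n m) (k : Fin m) (v : ℕ) (h1 : pv p k = v) (h2 : ¬ Occurs p (v + 1))
    (h3 : v < n) : Mv (mup p k v h1 h2 h3) p v k := by
  refine ⟨?_, h1, ?_⟩
  · unfold pv mup moveTo
    simp [Function.update_self]
  · intro l hl
    unfold mup moveTo
    simp [Function.update_of_ne hl]

lemma xp_cond_iff {p q : Idx n m} {i : ℕ} {k : Fin m} :
    (pv p k = i + 1 ∧ ¬ Occurs p i ∧ pv q k = i ∧ ∀ l, l ≠ k → q.val l = p.val l)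
      ↔ Mv p q i k :=
  ⟨fun ⟨a, _, c, d⟩ => ⟨a, c, d⟩, fun h => ⟨h.1, h.not_occ_fst, h.2.1, h.2.2⟩⟩

lemma xm_cond_iff {p q : Idx n m} {i : ℕ} {k : Fin m} :
    (pv p k = i ∧ ¬ Occurs p (i + 1) ∧ pv q k = i + 1 ∧ ∀ l, l ≠ k → q.val l = p.val l)
      ↔ Mv q p i k :=
  ⟨fun ⟨a, _, c, d⟩ => ⟨c, a, fun l hl => (d l hl).symm⟩,
   fun h => ⟨h.2.1, h.not_occ_snd, h.1, fun l hl => (h.2.2 l hl).symm⟩⟩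

variable (hbar a : ℂ)

lemma xpMat_apply (i r : ℕ) (q p : Idx n m) :
    xpMat n m hbar a i r q p
      = ∑ k : Fin m, if Mv p q i k then (bval m hbar a i (k.val + 1)) ^ r else 0 := by
  unfold xpMat
  exact Finset.sum_congr rfl fun k _ => if_congr xp_cond_iff rfl rfl

lemma xmMat_apply (i r : ℕ) (q p : Idx n m) :
    xmMat n m hbar a i r q p
      = ∑ k : Fin m, if Mv q p i k then (bval m hbar a i (k.val + 1)) ^ r else 0 := by
  unfold xmMat
  exact Finset.sum_congr rfl fun k _ => if_congr xm_cond_iff rfl rfl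

lemma xmMat_transpose (i r : ℕ) :
    xmMat n m hbar a i r = Matrix.transpose (xpMat n m hbar a i r) := by
  funext q p
  rw [Matrix.transpose_apply, xmMat_apply, xpMat_apply]

lemma sum_pv_eq {v : ℕ} {p : Idx n m} {k0 : Fin m} (h : pv p k0 = v) (C : Prop)
    [Decidable C] (f : Fin m → ℂ) :
    ∑ k : Fin m, (if pv p k = v ∧ C then f k else 0) = if C then f k0 else 0 := by
  rw [Finset.sum_eq_single k0]
  · simp [h]
  · intro b _ hb
    rw [if_neg]; rintro ⟨h1, _⟩; exact hb (pv_inj (h1.trans h.symm))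
  · simp

lemma sum_pv_not {v : ℕ} {p : Idx n m} (h : ¬ Occurs p v) (C : Prop) [Decidable C]
    (f : Fin m → ℂ) :
    ∑ k : Fin m, (if pv p k = v ∧ C then f k else 0) = 0 := by
  apply Finset.sum_eq_zero
  intro k _
  rw [if_neg]; rintro ⟨h1, _⟩; exact h ⟨k, h1⟩

/-- The diagonal entries of `ξ_{i,r}`. -/
def Dg (n m : ℕ) (hbar a : ℂ) (i r : ℕ) (p : Idx n m) : ℂ :=
  (∑ k : Fin m,
      if pv p k = i ∧ ¬ Occurs p (i + 1) then (bval m hbar a i (k.val + 1)) ^ r else 0) -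
    (∑ k : Fin m,
      if pv p k = i + 1 ∧ ¬ Occurs p i then (bval m hbar a i (k.val + 1)) ^ r else 0)

lemma xiMat_eq_diagonal (i r : ℕ) :
    xiMat n m hbar a i r = Matrix.diagonal (Dg n m hbar a i r) := by
  funext q p
  unfold xiMat Matrix.diagonal Dg
  by_cases h : q = p
  · subst h; simp
  · simp [h]

lemma Dg_pos {i : ℕ} {p : Idx n m} {k : Fin m} (hk : pv p k = i) (h2 : ¬ Occurs p (i + 1))
    (r : ℕ) : Dg n m hbar a i r p = (bval m hbar a i (k.val + 1)) ^ r := by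
  unfold Dg
  rw [sum_pv_eq hk, if_pos h2]
  have e2 : ∀ l : Fin m, (if pv p l = i + 1 ∧ ¬ Occurs p i then (bval m hbar a i (l.val + 1)) ^ r else 0) = 0 := by
    intro l; rw [if_neg]; rintro ⟨_, hc⟩; exact hc ⟨k, hk⟩
  rw [Finset.sum_congr rfl fun l _ => e2 l]
  simp

lemma Dg_neg {i : ℕ} {p : Idx n m} {k : Fin m} (hk : pv p k = i + 1) (h2 : ¬ Occurs p i)
    (r : ℕ) : Dg n m hbar a i r p = -(bval m hbar a i (k.val + 1)) ^ r := by
  unfold Dg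
  rw [sum_pv_eq hk, if_pos h2, sum_pv_not, zero_sub]
  rintro ⟨l, hl⟩
  exact h2 ⟨l, hl⟩

lemma Dg_zero_none {i : ℕ} {p : Idx n m} (h1 : ¬ Occurs p i) (h2 : ¬ Occurs p (i + 1))
    (r : ℕ) : Dg n m hbar a i r p = 0 := by
  unfold Dg
  rw [sum_pv_not h1, sum_pv_not h2, sub_zero]

lemma Dg_zero_both {i : ℕ} {p : Idx n m} (h1 : Occurs p i) (h2 : Occurs p (i + 1))
    (r : ℕ) : Dg n m hbar a i r p = 0 := by
  unfold Dg
  have e1 : ∀ k : Fin m, (if pv p k = i ∧ ¬ Occurs p (i+1) then (bval m hbar a i (k.val + 1)) ^ r else 0) = 0 := by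
    intro k; rw [if_neg]; rintro ⟨_, hc⟩; exact hc h2
  have e2 : ∀ k : Fin m, (if pv p k = i + 1 ∧ ¬ Occurs p i then (bval m hbar a i (k.val + 1)) ^ r else 0) = 0 := by
    intro k; rw [if_neg]; rintro ⟨_, hc⟩; exact hc h1
  rw [Finset.sum_congr rfl fun k _ => e1 k, Finset.sum_congr rfl fun k _ => e2 k]
  simp

lemma ite_mul_ite (P Q : Prop) [Decidable P] [Decidable Q] (u v : ℂ) :
    (if P then u else 0) * (if Q then v else 0) = if P ∧ Q then u * v else 0 := by
  by_cases hP : P <;> by_cases hQ : Q <;> simp [hP, hQ]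

lemma sum_exists_unique (P : Idx n m → Prop) [DecidablePred P] [Decidable (∃ x, P x)] (c : ℂ)
    (hu : ∀ x y, P x → P y → x = y) :
    ∑ x : Idx n m, (if P x then c else 0) = if ∃ x, P x then c else 0 := by
  by_cases h : ∃ x, P x
  · obtain ⟨x0, hx0⟩ := h
    rw [if_pos ⟨x0, hx0⟩, Finset.sum_eq_single x0]
    · rw [if_pos hx0]
    · intro b _ hb; rw [if_neg fun hc => hb (hu b x0 hc hx0)]
    · simp
  · rw [if_neg h]
    exact Finset.sum_eq_zero fun x _ => if_neg fun hc => h ⟨x, hc⟩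

lemma mul_pp_apply (i j ri rj : ℕ) (q p : Idx n m) :
    (xpMat n m hbar a i ri * xpMat n m hbar a j rj) q p =
      ∑ l : Fin m, ∑ k : Fin m,
        if ∃ x : Idx n m, Mv x q i l ∧ Mv p x j k then
          bval m hbar a i (l.val + 1) ^ ri * bval m hbar a j (k.val + 1) ^ rj
        else 0 := by
  rw [Matrix.mul_apply]
  have step : ∀ x : Idx n m, xpMat n m hbar a i ri q x * xpMat n m hbar a j rj x p
      = ∑ l : Fin m, ∑ k : Fin m,
          if Mv x q i l ∧ Mv p x j k then
            bval m hbar a i (l.val + 1) ^ ri * bval m hbar a j (k.val + 1) ^ rj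
          else 0 := by
    intro x
    rw [xpMat_apply, xpMat_apply, Finset.sum_mul_sum]
    exact Finset.sum_congr rfl fun l _ => Finset.sum_congr rfl fun k _ => ite_mul_ite ..
  rw [Finset.sum_congr rfl fun x _ => step x, Finset.sum_comm]
  refine Finset.sum_congr rfl fun l _ => ?_
  rw [Finset.sum_comm]
  exact Finset.sum_congr rfl fun k _ =>
    sum_exists_unique _ _ fun x y hx hy => Mv.right_unique hx.2 hy.2 rfl

lemma mul_pm_apply (i j ri rj : ℕ) (q p : Idx n m) :
    (xpMat n m hbar a i ri * xmMat n m hbar a j rj) q p =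
      ∑ l : Fin m, ∑ k : Fin m,
        if ∃ x : Idx n m, Mv x q i l ∧ Mv x p j k then
          bval m hbar a i (l.val + 1) ^ ri * bval m hbar a j (k.val + 1) ^ rj
        else 0 := by
  rw [Matrix.mul_apply]
  have step : ∀ x : Idx n m, xpMat n m hbar a i ri q x * xmMat n m hbar a j rj x p
      = ∑ l : Fin m, ∑ k : Fin m,
          if Mv x q i l ∧ Mv x p j k then
            bval m hbar a i (l.val + 1) ^ ri * bval m hbar a j (k.val + 1) ^ rj
          else 0 := by
    intro x
    rw [xpMat_apply, xmMat_apply, Finset.sum_mul_sum]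
    exact Finset.sum_congr rfl fun l _ => Finset.sum_congr rfl fun k _ => ite_mul_ite ..
  rw [Finset.sum_congr rfl fun x _ => step x, Finset.sum_comm]
  refine Finset.sum_congr rfl fun l _ => ?_
  rw [Finset.sum_comm]
  exact Finset.sum_congr rfl fun k _ =>
    sum_exists_unique _ _ fun x y hx hy => Mv.left_unique hx.2 hy.2

lemma mul_mp_apply (i j ri rj : ℕ) (q p : Idx n m) :
    (xmMat n m hbar a j rj * xpMat n m hbar a i ri) q p =
      ∑ l : Fin m, ∑ k : Fin m,
        if ∃ x : Idx n m, Mv q x j k ∧ Mv p x i l then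
          bval m hbar a i (l.val + 1) ^ ri * bval m hbar a j (k.val + 1) ^ rj
        else 0 := by
  rw [Matrix.mul_apply]
  have step : ∀ x : Idx n m, xmMat n m hbar a j rj q x * xpMat n m hbar a i ri x p
      = ∑ l : Fin m, ∑ k : Fin m,
          if Mv q x j k ∧ Mv p x i l then
            bval m hbar a i (l.val + 1) ^ ri * bval m hbar a j (k.val + 1) ^ rj
          else 0 := by
    intro x
    rw [xmMat_apply, xpMat_apply, Finset.sum_mul_sum, Finset.sum_comm]
    refine Finset.sum_congr rfl fun l _ => Finset.sum_congr rfl fun k _ => ?_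
    rw [ite_mul_ite]
    exact if_congr Iff.rfl (mul_comm _ _) rfl
  rw [Finset.sum_congr rfl fun x _ => step x, Finset.sum_comm]
  refine Finset.sum_congr rfl fun l _ => ?_
  rw [Finset.sum_comm]
  exact Finset.sum_congr rfl fun k _ =>
    sum_exists_unique _ _ fun x y hx hy => Mv.right_unique hx.2 hy.2 rfl

lemma cartan_self (i : ℕ) : cartan i i = 2 := by unfold cartan; simp

lemma cartan_right (i : ℕ) : cartan i (i + 1) = -1 := by
  unfold cartan; rw [if_neg (by omega), if_pos (Or.inl rfl)]

lemma cartan_left (j : ℕ) : cartan (j + 1) j = -1 := by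
  unfold cartan; rw [if_neg (by omega), if_pos (Or.inr rfl)]

lemma cartan_far {i j : ℕ} (h1 : i ≠ j) (h2 : j ≠ i + 1) (h3 : i ≠ j + 1) :
    cartan i j = 0 := by
  unfold cartan
  rw [if_neg h1, if_neg (by omega)]

lemma bval_succ_i (i k : ℕ) : bval m hbar a (i + 1) k = bval m hbar a i k + hbar / 2 := by
  unfold bval; push_cast; ring

lemma Dg_congr {p q : Idx n m} {i : ℕ}
    (h1 : ∀ l, pv p l = i ↔ pv q l = i) (h2 : ∀ l, pv p l = i + 1 ↔ pv q l = i + 1)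
    (r : ℕ) : Dg n m hbar a i r p = Dg n m hbar a i r q := by
  have ho1 : Occurs p i ↔ Occurs q i := exists_congr h1
  have ho2 : Occurs p (i + 1) ↔ Occurs q (i + 1) := exists_congr h2
  unfold Dg
  congr 1
  · exact Finset.sum_congr rfl fun k _ =>
      if_congr (and_congr (h1 k) (not_congr ho2)) rfl rfl
  · exact Finset.sum_congr rfl fun k _ =>
      if_congr (and_congr (h2 k) (not_congr ho1)) rfl rfl

lemma D_move_key (i j : ℕ) (hi : 1 ≤ i) {p q : Idx n m} {k : Fin m} (hMv : Mv p q j k) :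
    (Dg n m hbar a i 0 q - Dg n m hbar a i 0 p = cartan i j) ∧
    ∀ r : ℕ,
      (Dg n m hbar a i (r + 1) q - Dg n m hbar a i (r + 1) p)
          - bval m hbar a j (k.val + 1) * (Dg n m hbar a i r q - Dg n m hbar a i r p)
        = hbar * cartan i j / 2 * (Dg n m hbar a i r q + Dg n m hbar a i r p) := by
  have hj : 1 ≤ j := hMv.pos
  rcases eq_or_ne i j with hij | hij
  · -- i = j
    subst hij
    have hq := Dg_pos (n := n) hbar a hMv.2.1 hMv.not_occ_snd
    have hp := Dg_neg (n := n) hbar a hMv.1 hMv.not_occ_fst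
    rw [cartan_self]
    constructor
    · rw [hq, hp]; norm_num
    · intro r
      rw [hq, hq, hp, hp, pow_succ]
      ring
  rcases eq_or_ne j (i + 1) with hj1 | hj1
  · -- j = i + 1
    subst hj1
    have hp2 : pv p k = i + 2 := hMv.1
    have hq1 : pv q k = i + 1 := hMv.2.1
    by_cases hOc : Occurs p i
    · obtain ⟨l, hl⟩ := hOc
      have hlk : l ≠ k := by intro h; rw [h, hp2] at hl; omega
      have hql : pv q l = i := by rw [hMv.pv_eq hlk, hl]
      have hq := Dg_zero_both (n := n) hbar a ⟨l, hql⟩ ⟨k, hq1⟩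
      have hp := Dg_pos (n := n) hbar a hl hMv.not_occ_fst
      have hadj : k.val = l.val + 1 := gap_adj hql hq1
      have hcb : bval m hbar a (i + 1) (k.val + 1) = bval m hbar a i (l.val + 1) - hbar / 2 := by
        rw [hadj]; unfold bval; push_cast; ring
      rw [cartan_right]
      constructor
      · rw [hq, hp]; simp
      · intro r
        rw [hq, hq, hp, hp, hcb, pow_succ]
        ring
    · have hp := Dg_zero_none (n := n) hbar a hOc hMv.not_occ_fst
      have hnq : ¬ Occurs q i := by
        rintro ⟨t, ht⟩
        by_cases htk : t = k
        · rw [htk, hq1] at ht; omega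
        · exact hOc ⟨t, by rw [← hMv.pv_eq htk, ht]⟩
      have hq := Dg_neg (n := n) hbar a hq1 hnq
      have hcb : bval m hbar a i (k.val + 1) = bval m hbar a (i + 1) (k.val + 1) - hbar / 2 := by
        unfold bval; push_cast; ring
      rw [cartan_right]
      constructor
      · rw [hq, hp]; simp
      · intro r
        rw [hq, hq, hp, hp, hcb, pow_succ]
        ring
  rcases eq_or_ne i (j + 1) with hi1 | hi1
  · -- i = j + 1
    subst hi1
    have hp1 : pv p k = j + 1 := hMv.1
    have hqk : pv q k = j := hMv.2.1
    by_cases hOc : Occurs p (j + 2)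
    · obtain ⟨l, hl⟩ := hOc
      have hlk : l ≠ k := by intro h; rw [h, hp1] at hl; omega
      have hql : pv q l = j + 2 := by rw [hMv.pv_eq hlk, hl]
      have hadj : l.val = k.val + 1 := gap_adj hp1 hl
      have hp := Dg_zero_both (n := n) hbar a ⟨k, hp1⟩ ⟨l, hl⟩
      have hq := Dg_neg (n := n) hbar a hql hMv.not_occ_snd
      have hcb : bval m hbar a (j + 1) (l.val + 1) = bval m hbar a j (k.val + 1) - hbar / 2 := by
        rw [hadj]; unfold bval; push_cast; ring
      rw [cartan_left]
      constructor
      · rw [hq, hp]; simp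
      · intro r
        rw [hq, hq, hp, hp, hcb, pow_succ]
        ring
    · have hnq : ¬ Occurs q (j + 2) := by
        rintro ⟨t, ht⟩
        by_cases htk : t = k
        · rw [htk, hqk] at ht; omega
        · exact hOc ⟨t, by rw [← hMv.pv_eq htk, ht]⟩
      have hp := Dg_pos (n := n) hbar a hp1 hOc
      have hq := Dg_zero_none (n := n) hbar a hMv.not_occ_snd hnq
      have hcb : bval m hbar a (j + 1) (k.val + 1) = bval m hbar a j (k.val + 1) + hbar / 2 :=
        bval_succ_i hbar a j (k.val + 1)
      rw [cartan_left]
      constructor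
      · rw [hq, hp]; simp
      · intro r
        rw [hq, hq, hp, hp, hcb, pow_succ]
        ring
  · -- far case
    have h1 : ∀ l, pv p l = i ↔ pv q l = i := by
      intro l
      by_cases hlk : l = k
      · subst hlk
        rw [hMv.1, hMv.2.1]
        constructor <;> intro h <;> omega
      · rw [hMv.pv_eq hlk]
    have h2 : ∀ l, pv p l = i + 1 ↔ pv q l = i + 1 := by
      intro l
      by_cases hlk : l = k
      · subst hlk
        rw [hMv.1, hMv.2.1]
        constructor <;> intro h <;> omega
      · rw [hMv.pv_eq hlk]
    have hC : cartan i j = 0 := cartan_far hij hj1 hi1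
    constructor
    · rw [Dg_congr hbar a h1 h2, sub_self, hC]
    · intro r
      rw [Dg_congr hbar a h1 h2 r, Dg_congr hbar a h1 h2 (r + 1), hC]
      ring

lemma Y2p_mat (i j : ℕ) (hi : 1 ≤ i) (s : ℕ) :
    xiMat n m hbar a i 0 * xpMat n m hbar a j s
        - xpMat n m hbar a j s * xiMat n m hbar a i 0
      = cartan i j • xpMat n m hbar a j s := by
  rw [xiMat_eq_diagonal]
  ext q p
  rw [Matrix.sub_apply, Matrix.smul_apply, Matrix.diagonal_mul, Matrix.mul_diagonal,
    xpMat_apply, smul_eq_mul]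
  rw [Finset.mul_sum, Finset.sum_mul, Finset.mul_sum, ← Finset.sum_sub_distrib]
  refine Finset.sum_congr rfl fun k _ => ?_
  split_ifs with h
  · have key := (D_move_key hbar a i j hi h).1
    linear_combination bval m hbar a j (k.val + 1) ^ s * key
  · simp

lemma Y3p_mat (i j : ℕ) (hi : 1 ≤ i) (r s : ℕ) :
    (xiMat n m hbar a i (r + 1) * xpMat n m hbar a j s
        - xpMat n m hbar a j s * xiMat n m hbar a i (r + 1))
      - (xiMat n m hbar a i r * xpMat n m hbar a j (s + 1)
        - xpMat n m hbar a j (s + 1) * xiMat n m hbar a i r)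
      = (hbar * cartan i j / 2) •
          (xiMat n m hbar a i r * xpMat n m hbar a j s
            + xpMat n m hbar a j s * xiMat n m hbar a i r) := by
  rw [xiMat_eq_diagonal, xiMat_eq_diagonal]
  ext q p
  rw [Matrix.sub_apply, Matrix.sub_apply, Matrix.sub_apply, Matrix.smul_apply,
    Matrix.add_apply, Matrix.diagonal_mul, Matrix.mul_diagonal, Matrix.diagonal_mul,
    Matrix.mul_diagonal, Matrix.diagonal_mul, Matrix.mul_diagonal,
    xpMat_apply, xpMat_apply, smul_eq_mul]
  rw [Finset.mul_sum, Finset.sum_mul, Finset.mul_sum, Finset.sum_mul, Finset.mul_sum,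
    Finset.sum_mul, ← Finset.sum_sub_distrib, ← Finset.sum_sub_distrib,
    ← Finset.sum_sub_distrib, ← Finset.sum_add_distrib, Finset.mul_sum]
  refine Finset.sum_congr rfl fun k _ => ?_
  split_ifs with h
  · have key := (D_move_key hbar a i j hi h).2 r
    rw [pow_succ]
    linear_combination bval m hbar a j (k.val + 1) ^ s * key
  · simp

lemma val_eq_of_pv {p q : Idx n m} {k l : Fin m} (h : pv p k = pv q l) :
    p.val k = q.val l := by
  apply Fin.ext; unfold pv at h; omega

lemma xp_mul_xp_self_zero (i r s : ℕ) :
    xpMat n m hbar a i r * xpMat n m hbar a i s = 0 := by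
  ext q p
  rw [mul_pp_apply, Matrix.zero_apply]
  refine Finset.sum_eq_zero fun l _ => Finset.sum_eq_zero fun k _ => ?_
  rw [if_neg]
  rintro ⟨x, h1, h2⟩
  exact h2.not_occ_snd ⟨l, h1.1⟩

lemma pm_adj_zero1 (i r s : ℕ) :
    xpMat n m hbar a i r * xmMat n m hbar a (i + 1) s = 0 := by
  ext q p
  rw [mul_pm_apply, Matrix.zero_apply]
  refine Finset.sum_eq_zero fun l _ => Finset.sum_eq_zero fun k _ => ?_
  rw [if_neg]
  rintro ⟨x, h1, h2⟩
  exact h2.not_occ_fst ⟨l, h1.1⟩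

lemma pm_adj_zero2 (i r s : ℕ) :
    xmMat n m hbar a (i + 1) s * xpMat n m hbar a i r = 0 := by
  ext q p
  rw [mul_mp_apply, Matrix.zero_apply]
  refine Finset.sum_eq_zero fun l _ => Finset.sum_eq_zero fun k _ => ?_
  rw [if_neg]
  rintro ⟨x, h1, h2⟩
  exact h2.not_occ_snd ⟨k, h1.2.1⟩

lemma pm_adj_zero3 (j r s : ℕ) :
    xpMat n m hbar a (j + 1) r * xmMat n m hbar a j s = 0 := by
  ext q p
  rw [mul_pm_apply, Matrix.zero_apply]
  refine Finset.sum_eq_zero fun l _ => Finset.sum_eq_zero fun k _ => ?_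
  rw [if_neg]
  rintro ⟨x, h1, h2⟩
  exact h1.not_occ_fst ⟨k, h2.1⟩

lemma pm_adj_zero4 (j r s : ℕ) :
    xmMat n m hbar a j s * xpMat n m hbar a (j + 1) r = 0 := by
  ext q p
  rw [mul_mp_apply, Matrix.zero_apply]
  refine Finset.sum_eq_zero fun l _ => Finset.sum_eq_zero fun k _ => ?_
  rw [if_neg]
  rintro ⟨x, h1, h2⟩
  exact h1.not_occ_snd ⟨l, h2.2.1⟩

lemma pm_self (i r s : ℕ) (hin : i < n) :
    xpMat n m hbar a i r * xmMat n m hbar a i s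
      = Matrix.diagonal (fun p : Idx n m => ∑ k : Fin m,
          if pv p k = i ∧ ¬ Occurs p (i + 1) then bval m hbar a i (k.val + 1) ^ (r + s)
          else 0) := by
  ext q p
  rw [mul_pm_apply, Matrix.diagonal_apply]
  have step1 : ∀ l : Fin m,
      (∑ k : Fin m, if ∃ x : Idx n m, Mv x q i l ∧ Mv x p i k then
          bval m hbar a i (l.val + 1) ^ r * bval m hbar a i (k.val + 1) ^ s else 0)
        = if q = p ∧ pv p l = i ∧ ¬ Occurs p (i + 1) then
            bval m hbar a i (l.val + 1) ^ (r + s) else 0 := by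
    intro l
    rw [Finset.sum_eq_single l]
    · rw [pow_add]
      refine if_congr ⟨?_, ?_⟩ rfl rfl
      · rintro ⟨x, h1, h2⟩
        exact ⟨Mv.right_unique h1 h2 rfl, h2.2.1, h2.not_occ_snd⟩
      · rintro ⟨hqp, h1, h2⟩
        subst hqp
        exact ⟨mup _ l i h1 h2 hin, Mv_mup _ l i h1 h2 hin, Mv_mup _ l i h1 h2 hin⟩
    · intro k _ hk
      rw [if_neg]
      rintro ⟨x, h1, h2⟩
      exact hk (pv_inj (h2.1.trans h1.1.symm))
    · simp
  rw [Finset.sum_congr rfl fun l _ => step1 l]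
  by_cases hqp : q = p
  · subst hqp; simp
  · rw [if_neg hqp]
    exact Finset.sum_eq_zero fun l _ => if_neg fun hc => hqp hc.1

lemma mp_self (i r s : ℕ) (hi : 1 ≤ i) :
    xmMat n m hbar a i s * xpMat n m hbar a i r
      = Matrix.diagonal (fun p : Idx n m => ∑ k : Fin m,
          if pv p k = i + 1 ∧ ¬ Occurs p i then bval m hbar a i (k.val + 1) ^ (r + s)
          else 0) := by
  ext q p
  rw [mul_mp_apply, Matrix.diagonal_apply]
  have step1 : ∀ l : Fin m,
      (∑ k : Fin m, if ∃ x : Idx n m, Mv q x i k ∧ Mv p x i l then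
          bval m hbar a i (l.val + 1) ^ r * bval m hbar a i (k.val + 1) ^ s else 0)
        = if q = p ∧ pv p l = i + 1 ∧ ¬ Occurs p i then
            bval m hbar a i (l.val + 1) ^ (r + s) else 0 := by
    intro l
    rw [Finset.sum_eq_single l]
    · rw [pow_add]
      refine if_congr ⟨?_, ?_⟩ rfl rfl
      · rintro ⟨x, h1, h2⟩
        exact ⟨Mv.left_unique h1 h2, h2.1, h2.not_occ_fst⟩
      · rintro ⟨hqp, h1, h2⟩
        subst hqp
        exact ⟨mdown _ l i h1 h2 hi, Mv_mdown _ l i h1 h2 hi, Mv_mdown _ l i h1 h2 hi⟩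
    · intro k _ hk
      rw [if_neg]
      rintro ⟨x, h1, h2⟩
      exact hk (pv_inj (h1.2.1.trans h2.2.1.symm))
    · simp
  rw [Finset.sum_congr rfl fun l _ => step1 l]
  by_cases hqp : q = p
  · subst hqp; simp
  · rw [if_neg hqp]
    exact Finset.sum_eq_zero fun l _ => if_neg fun hc => hqp hc.1

lemma Y5_mat_self (i r s : ℕ) (hi : 1 ≤ i) (hin : i < n) :
    xpMat n m hbar a i r * xmMat n m hbar a i s
        - xmMat n m hbar a i s * xpMat n m hbar a i r
      = xiMat n m hbar a i (r + s) := by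
  rw [pm_self hbar a i r s hin, mp_self hbar a i r s hi, xiMat_eq_diagonal,
    Matrix.diagonal_sub]
  congr 1

lemma far_exchange_pp {i j : ℕ} (hi : 1 ≤ i) (h1 : i + 1 ≠ j) (h2 : j + 1 ≠ i)
    {q p : Idx n m} {l k : Fin m} :
    (∃ x : Idx n m, Mv x q i l ∧ Mv p x j k) → ∃ y : Idx n m, Mv y q j k ∧ Mv p y i l := by
  rintro ⟨x, hxq, hpx⟩
  have hlk : l ≠ k := by
    intro h
    have hv := hpx.2.1
    rw [← h, hxq.1] at hv
    exact h1 hv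
  have hkl : k ≠ l := fun h => hlk h.symm
  have hpl : pv p l = i + 1 := by rw [← hpx.pv_eq hlk, hxq.1]
  have hnoi : ¬ Occurs p i := by
    rintro ⟨t, ht⟩
    by_cases htk : t = k
    · subst htk; rw [hpx.1] at ht; exact h2 ht
    · exact hxq.not_occ_fst ⟨t, by rw [hpx.pv_eq htk, ht]⟩
  have hMy := Mv_mdown p l i hpl hnoi hi
  refine ⟨mdown p l i hpl hnoi hi, ⟨?_, ?_, ?_⟩, hMy⟩
  · rw [hMy.pv_eq hkl]; exact hpx.1
  · rw [hxq.pv_eq hkl]; exact hpx.2.1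
  · intro t ht
    by_cases htl : t = l
    · subst htl
      exact val_eq_of_pv (by rw [hxq.2.1, hMy.2.1])
    · rw [hxq.2.2 t htl, hpx.2.2 t ht]
      exact (hMy.2.2 t htl).symm

lemma pp_far {i j : ℕ} (hi : 1 ≤ i) (hj : 1 ≤ j) (hij : i ≠ j) (h1 : i + 1 ≠ j)
    (h2 : j + 1 ≠ i) (r s : ℕ) :
    xpMat n m hbar a i r * xpMat n m hbar a j s
      = xpMat n m hbar a j s * xpMat n m hbar a i r := by
  ext q p
  rw [mul_pp_apply, mul_pp_apply, Finset.sum_comm]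
  refine Finset.sum_congr rfl fun l _ => Finset.sum_congr rfl fun k _ => ?_
  rw [mul_comm]
  refine if_congr ⟨?_, ?_⟩ rfl rfl
  · exact far_exchange_pp hi h1 h2
  · exact far_exchange_pp hj h2 h1

lemma far_exchange_pm1 {i j : ℕ} (hi : 1 ≤ i) (hij : i ≠ j)
    {q p : Idx n m} {l k : Fin m} :
    (∃ x : Idx n m, Mv x q i l ∧ Mv x p j k) → ∃ y : Idx n m, Mv q y j k ∧ Mv p y i l := by
  rintro ⟨x, hxq, hxp⟩
  have hlk : l ≠ k := by
    intro h
    have hv := hxp.1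
    rw [← h, hxq.1] at hv
    omega
  have hkl : k ≠ l := fun h => hlk h.symm
  have hpl : pv p l = i + 1 := by rw [hxp.pv_eq hlk, hxq.1]
  have hnoi : ¬ Occurs p i := by
    rintro ⟨t, ht⟩
    by_cases htk : t = k
    · subst htk; rw [hxp.2.1] at ht; exact hij ht.symm
    · exact hxq.not_occ_fst ⟨t, by rw [← hxp.pv_eq htk, ht]⟩
  have hMy := Mv_mdown p l i hpl hnoi hi
  refine ⟨mdown p l i hpl hnoi hi, ⟨?_, ?_, ?_⟩, hMy⟩
  · rw [hxq.pv_eq hkl]; exact hxp.1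
  · rw [hMy.pv_eq hkl]; exact hxp.2.1
  · intro t ht
    by_cases htl : t = l
    · subst htl
      exact val_eq_of_pv (by rw [hMy.2.1, hxq.2.1])
    · rw [hMy.2.2 t htl, hxp.2.2 t ht]
      exact (hxq.2.2 t htl).symm

lemma far_exchange_pm2 {i j : ℕ} (hij : i ≠ j) (h2 : j + 1 ≠ i)
    {q p : Idx n m} {l k : Fin m} :
    (∃ y : Idx n m, Mv q y j k ∧ Mv p y i l) → ∃ x : Idx n m, Mv x q i l ∧ Mv x p j k := by
  rintro ⟨y, hqy, hpy⟩
  have hkl : k ≠ l := by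
    intro h
    have hv := hpy.2.1
    rw [← h, hqy.2.1] at hv
    omega
  have hlk : l ≠ k := fun h => hkl h.symm
  have hpk : pv p k = j := by rw [← hpy.pv_eq hkl]; exact hqy.2.1
  have hjn : j < n := by
    have h := hqy.1
    have h2 := (q.val k).isLt
    unfold pv at h
    omega
  have hnoj : ¬ Occurs p (j + 1) := by
    rintro ⟨t, ht⟩
    by_cases htl : t = l
    · subst htl; rw [hpy.1] at ht; omega
    · exact hqy.not_occ_snd ⟨t, by rw [hpy.pv_eq htl, ht]⟩
  have hMx := Mv_mup p k j hpk hnoj hjn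
  refine ⟨mup p k j hpk hnoj hjn, ⟨?_, ?_, ?_⟩, hMx⟩
  · rw [← hMx.pv_eq hlk]; exact hpy.1
  · rw [← hqy.pv_eq hlk]; exact hpy.2.1
  · intro t ht
    by_cases htk : t = k
    · subst htk
      exact val_eq_of_pv (by rw [hqy.1, hMx.1])
    · rw [← hqy.2.2 t htk, hpy.2.2 t ht]
      exact hMx.2.2 t htk

lemma pm_far {i j : ℕ} (hi : 1 ≤ i) (hij : i ≠ j) (h2 : j + 1 ≠ i) (r s : ℕ) :
    xpMat n m hbar a i r * xmMat n m hbar a j s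
      = xmMat n m hbar a j s * xpMat n m hbar a i r := by
  ext q p
  rw [mul_pm_apply, mul_mp_apply]
  refine Finset.sum_congr rfl fun l _ => Finset.sum_congr rfl fun k _ => ?_
  exact if_congr ⟨far_exchange_pm1 hi hij, far_exchange_pm2 hij h2⟩ rfl rfl

/-- Condition for the composite `x⁺_i ∘ x⁺_{i+1}` acting at one position. -/
def CondA (q p : Idx n m) (i : ℕ) (k : Fin m) : Prop :=
  pv p k = i + 2 ∧ pv q k = i ∧ (∀ t, t ≠ k → q.val t = p.val t) ∧ ¬ Occurs p (i + 1)

/-- Condition for the composite `x⁺_{i+1} ∘ x⁺_i`. -/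
def CondB (q p : Idx n m) (i : ℕ) (l k : Fin m) : Prop :=
  pv p l = i + 1 ∧ pv q l = i ∧ pv p k = i + 2 ∧ pv q k = i + 1 ∧
    ∀ t, t ≠ l → t ≠ k → q.val t = p.val t

lemma adj_pp1_apply (i r s : ℕ) (q p : Idx n m) :
    (xpMat n m hbar a i r * xpMat n m hbar a (i + 1) s) q p
      = ∑ k : Fin m, if CondA q p i k then
          bval m hbar a i (k.val + 1) ^ r * bval m hbar a (i + 1) (k.val + 1) ^ s
        else 0 := by
  rw [mul_pp_apply]
  refine Finset.sum_congr rfl fun l _ => ?_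
  rw [Finset.sum_eq_single l]
  · refine if_congr ⟨?_, ?_⟩ rfl rfl
    · rintro ⟨x, h1, h2⟩
      refine ⟨h2.1, h1.2.1, fun t ht => ?_, h2.not_occ_fst⟩
      rw [h1.2.2 t ht, h2.2.2 t ht]
    · rintro ⟨hp2, hq0, hagr, hno⟩
      have hMx := Mv_mdown p l (i + 1) hp2 hno (by omega)
      refine ⟨mdown p l (i + 1) hp2 hno (by omega), ⟨hMx.2.1, hq0, fun t ht => ?_⟩, hMx⟩
      rw [hagr t ht]
      exact (hMx.2.2 t ht).symm
  · intro k _ hk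
    rw [if_neg]
    rintro ⟨x, h1, h2⟩
    have hlk : l ≠ k := fun h => hk h.symm
    exact h2.not_occ_fst ⟨l, by rw [← h2.pv_eq hlk]; exact h1.1⟩
  · simp

lemma adj_pp2_apply (i r s : ℕ) (hi : 1 ≤ i) (q p : Idx n m) :
    (xpMat n m hbar a (i + 1) s * xpMat n m hbar a i r) q p
      = ∑ l : Fin m, ∑ k : Fin m, if CondB q p i l k then
          bval m hbar a i (l.val + 1) ^ r * bval m hbar a (i + 1) (k.val + 1) ^ s
        else 0 := by
  rw [mul_pp_apply, Finset.sum_comm]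
  refine Finset.sum_congr rfl fun l _ => Finset.sum_congr rfl fun k _ => ?_
  rw [mul_comm]
  refine if_congr ⟨?_, ?_⟩ rfl rfl
  · rintro ⟨x, h1, h2⟩
    have hlk : l ≠ k := by
      intro h
      have hv := h1.1
      rw [← h] at hv
      have hv2 := h2.2.1
      omega
    have hkl : k ≠ l := fun h => hlk h.symm
    refine ⟨h2.1, ?_, ?_, h1.2.1, fun t htl htk => ?_⟩
    · rw [h1.pv_eq hlk]; exact h2.2.1
    · rw [← h2.pv_eq hkl]; exact h1.1
    · rw [h1.2.2 t htk, h2.2.2 t htl]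
  · rintro ⟨hpl, hql, hpk, hqk, hagr⟩
    have hlk : l ≠ k := by intro h; rw [h, hpk] at hpl; omega
    have hkl : k ≠ l := fun h => hlk h.symm
    have hnoi : ¬ Occurs p i := by
      rintro ⟨t, ht⟩
      by_cases htl : t = l
      · subst htl; omega
      by_cases htk : t = k
      · subst htk; omega
      have : pv q t = i := by unfold pv; rw [hagr t htl htk]; exact ht
      exact htl (pv_inj (this.trans hql.symm))
    have hMx := Mv_mdown p l i hpl hnoi hi
    refine ⟨mdown p l i hpl hnoi hi, ⟨?_, hqk, fun t ht => ?_⟩, hMx⟩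
    · rw [hMx.pv_eq hkl]; exact hpk
    · by_cases htl : t = l
      · subst htl
        exact val_eq_of_pv (by rw [hql, hMx.2.1])
      · rw [hagr t htl ht]
        exact (hMx.2.2 t htl).symm

lemma Y4p_adj (i : ℕ) (hi : 1 ≤ i) (r s : ℕ) :
    (xpMat n m hbar a i (r + 1) * xpMat n m hbar a (i + 1) s
        - xpMat n m hbar a (i + 1) s * xpMat n m hbar a i (r + 1))
      - (xpMat n m hbar a i r * xpMat n m hbar a (i + 1) (s + 1)
        - xpMat n m hbar a (i + 1) (s + 1) * xpMat n m hbar a i r)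
      = (hbar * cartan i (i + 1) / 2) •
          (xpMat n m hbar a i r * xpMat n m hbar a (i + 1) s
            + xpMat n m hbar a (i + 1) s * xpMat n m hbar a i r) := by
  rw [cartan_right]
  ext q p
  rw [Matrix.sub_apply, Matrix.sub_apply, Matrix.sub_apply, Matrix.smul_apply,
    Matrix.add_apply, adj_pp1_apply, adj_pp1_apply, adj_pp1_apply,
    adj_pp2_apply hbar a _ _ _ hi, adj_pp2_apply hbar a _ _ _ hi,
    adj_pp2_apply hbar a _ _ _ hi, smul_eq_mul]
  have hA : (∑ k : Fin m, if CondA q p i k then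
        bval m hbar a i (k.val + 1) ^ (r + 1) * bval m hbar a (i + 1) (k.val + 1) ^ s
      else 0)
      - (∑ k : Fin m, if CondA q p i k then
        bval m hbar a i (k.val + 1) ^ r * bval m hbar a (i + 1) (k.val + 1) ^ (s + 1)
      else 0)
      + hbar / 2 * (∑ k : Fin m, if CondA q p i k then
        bval m hbar a i (k.val + 1) ^ r * bval m hbar a (i + 1) (k.val + 1) ^ s
      else 0) = 0 := by
    rw [Finset.mul_sum, ← Finset.sum_sub_distrib, ← Finset.sum_add_distrib]
    refine Finset.sum_eq_zero fun k _ => ?_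
    split_ifs with h
    · have hc : bval m hbar a (i + 1) (k.val + 1) = bval m hbar a i (k.val + 1) + hbar / 2 :=
        bval_succ_i hbar a i (k.val + 1)
      rw [pow_succ, pow_succ, hc]
      ring
    · ring
  have hB : (∑ l : Fin m, ∑ k : Fin m, if CondB q p i l k then
        bval m hbar a i (l.val + 1) ^ (r + 1) * bval m hbar a (i + 1) (k.val + 1) ^ s
      else 0)
      - (∑ l : Fin m, ∑ k : Fin m, if CondB q p i l k then
        bval m hbar a i (l.val + 1) ^ r * bval m hbar a (i + 1) (k.val + 1) ^ (s + 1)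
      else 0)
      - hbar / 2 * (∑ l : Fin m, ∑ k : Fin m, if CondB q p i l k then
        bval m hbar a i (l.val + 1) ^ r * bval m hbar a (i + 1) (k.val + 1) ^ s
      else 0) = 0 := by
    rw [Finset.mul_sum, ← Finset.sum_sub_distrib, ← Finset.sum_sub_distrib]
    refine Finset.sum_eq_zero fun l _ => ?_
    rw [Finset.mul_sum, ← Finset.sum_sub_distrib, ← Finset.sum_sub_distrib]
    refine Finset.sum_eq_zero fun k _ => ?_
    split_ifs with h
    · have hadj : k.val = l.val + 1 := gap_adj h.1 h.2.2.1
      have hc : bval m hbar a (i + 1) (k.val + 1) = bval m hbar a i (l.val + 1) - hbar / 2 := by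
        rw [hadj]; unfold bval; push_cast; ring
      rw [pow_succ, pow_succ, hc]
      ring
    · ring
  linear_combination hA - hB

lemma xiMat_transpose (i r : ℕ) :
    Matrix.transpose (xiMat n m hbar a i r) = xiMat n m hbar a i r := by
  rw [xiMat_eq_diagonal]
  exact Matrix.diagonal_transpose _

lemma Y4p_mat (i j : ℕ) (hi : 1 ≤ i) (hj : 1 ≤ j) (r s : ℕ) :
    (xpMat n m hbar a i (r + 1) * xpMat n m hbar a j s
        - xpMat n m hbar a j s * xpMat n m hbar a i (r + 1))
      - (xpMat n m hbar a i r * xpMat n m hbar a j (s + 1)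
        - xpMat n m hbar a j (s + 1) * xpMat n m hbar a i r)
      = (hbar * cartan i j / 2) •
          (xpMat n m hbar a i r * xpMat n m hbar a j s
            + xpMat n m hbar a j s * xpMat n m hbar a i r) := by
  rcases eq_or_ne j (i + 1) with hj1 | hj1
  · subst hj1
    exact Y4p_adj hbar a i hi r s
  rcases eq_or_ne i (j + 1) with hi1 | hi1
  · subst hi1
    have h := Y4p_adj (n := n) (m := m) hbar a j hj s r
    rw [cartan_right] at h
    rw [cartan_left, add_comm (xpMat n m hbar a (j + 1) r * xpMat n m hbar a j s)
      (xpMat n m hbar a j s * xpMat n m hbar a (j + 1) r), ← h]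
    abel
  rcases eq_or_ne i j with hij | hij
  · subst hij
    simp [xp_mul_xp_self_zero]
  · rw [pp_far hbar a hi hj hij (fun h => hj1 h.symm) (fun h => hi1 h.symm),
      pp_far hbar a hi hj hij (fun h => hj1 h.symm) (fun h => hi1 h.symm),
      pp_far hbar a hi hj hij (fun h => hj1 h.symm) (fun h => hi1 h.symm),
      cartan_far hij hj1 hi1]
    simp

lemma Y5_mat (i j : ℕ) (hi : 1 ≤ i) (hin : i < n) (r s : ℕ) :
    xpMat n m hbar a i r * xmMat n m hbar a j s
        - xmMat n m hbar a j s * xpMat n m hbar a i r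
      = if i = j then xiMat n m hbar a i (r + s) else 0 := by
  rcases eq_or_ne i j with hij | hij
  · subst hij
    rw [if_pos rfl]
    exact Y5_mat_self hbar a i r s hi hin
  rw [if_neg hij]
  rcases eq_or_ne j (i + 1) with hj1 | hj1
  · subst hj1
    rw [pm_adj_zero1, pm_adj_zero2, sub_zero]
  rcases eq_or_ne i (j + 1) with hi1 | hi1
  · subst hi1
    rw [pm_adj_zero3, pm_adj_zero4, sub_zero]
  · rw [pm_far hbar a hi hij (fun h => hi1 h.symm), sub_self]

lemma Y2m_mat (i j : ℕ) (hi : 1 ≤ i) (s : ℕ) :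
    xiMat n m hbar a i 0 * xmMat n m hbar a j s
        - xmMat n m hbar a j s * xiMat n m hbar a i 0
      = (-(cartan i j)) • xmMat n m hbar a j s := by
  have h := congrArg Matrix.transpose (Y2p_mat (n := n) (m := m) hbar a i j hi s)
  rw [Matrix.transpose_sub, Matrix.transpose_smul, Matrix.transpose_mul,
    Matrix.transpose_mul, xiMat_transpose, ← xmMat_transpose] at h
  rw [neg_smul, ← h]
  abel

lemma Y3m_mat (i j : ℕ) (hi : 1 ≤ i) (r s : ℕ) :
    (xiMat n m hbar a i (r + 1) * xmMat n m hbar a j s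
        - xmMat n m hbar a j s * xiMat n m hbar a i (r + 1))
      - (xiMat n m hbar a i r * xmMat n m hbar a j (s + 1)
        - xmMat n m hbar a j (s + 1) * xiMat n m hbar a i r)
      = (-(hbar * cartan i j / 2)) •
          (xiMat n m hbar a i r * xmMat n m hbar a j s
            + xmMat n m hbar a j s * xiMat n m hbar a i r) := by
  have h := congrArg Matrix.transpose (Y3p_mat (n := n) (m := m) hbar a i j hi r s)
  rw [Matrix.transpose_sub, Matrix.transpose_sub, Matrix.transpose_sub,
    Matrix.transpose_smul, Matrix.transpose_add, Matrix.transpose_mul,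
    Matrix.transpose_mul, Matrix.transpose_mul, Matrix.transpose_mul,
    Matrix.transpose_mul, Matrix.transpose_mul, xiMat_transpose, xiMat_transpose,
    ← xmMat_transpose, ← xmMat_transpose] at h
  rw [neg_smul, add_comm (xiMat n m hbar a i r * xmMat n m hbar a j s)
    (xmMat n m hbar a j s * xiMat n m hbar a i r), ← h]
  abel

lemma Y4m_mat (i j : ℕ) (hi : 1 ≤ i) (hj : 1 ≤ j) (r s : ℕ) :
    (xmMat n m hbar a i (r + 1) * xmMat n m hbar a j s
        - xmMat n m hbar a j s * xmMat n m hbar a i (r + 1))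
      - (xmMat n m hbar a i r * xmMat n m hbar a j (s + 1)
        - xmMat n m hbar a j (s + 1) * xmMat n m hbar a i r)
      = (-(hbar * cartan i j / 2)) •
          (xmMat n m hbar a i r * xmMat n m hbar a j s
            + xmMat n m hbar a j s * xmMat n m hbar a i r) := by
  have h := congrArg Matrix.transpose (Y4p_mat (n := n) (m := m) hbar a i j hi hj r s)
  rw [Matrix.transpose_sub, Matrix.transpose_sub, Matrix.transpose_sub,
    Matrix.transpose_smul, Matrix.transpose_add, Matrix.transpose_mul,
    Matrix.transpose_mul, Matrix.transpose_mul, Matrix.transpose_mul,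
    Matrix.transpose_mul, Matrix.transpose_mul,
    ← xmMat_transpose, ← xmMat_transpose, ← xmMat_transpose, ← xmMat_transpose] at h
  rw [neg_smul, add_comm (xmMat n m hbar a i r * xmMat n m hbar a j s)
    (xmMat n m hbar a j s * xmMat n m hbar a i r), ← h]
  abel

lemma Y1_mat (i j r s : ℕ) :
    xiMat n m hbar a i r * xiMat n m hbar a j s
      = xiMat n m hbar a j s * xiMat n m hbar a i r := by
  rw [xiMat_eq_diagonal, xiMat_eq_diagonal, Matrix.diagonal_mul_diagonal,
    Matrix.diagonal_mul_diagonal]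
  congr 1
  funext p
  simp [mul_comm]

lemma tl_mul (A B : Matrix (Idx n m) (Idx n m) ℂ) :
    Matrix.toLin' A * Matrix.toLin' B = Matrix.toLin' (A * B) := by
  rw [Matrix.toLin'_mul, Module.End.mul_eq_comp]

lemma tl_sub (A B : Matrix (Idx n m) (Idx n m) ℂ) :
    Matrix.toLin' A - Matrix.toLin' B = Matrix.toLin' (A - B) := (map_sub _ A B).symm

lemma tl_add (A B : Matrix (Idx n m) (Idx n m) ℂ) :
    Matrix.toLin' A + Matrix.toLin' B = Matrix.toLin' (A + B) := (map_add _ A B).symm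

lemma tl_smul (c : ℂ) (A : Matrix (Idx n m) (Idx n m) ℂ) :
    c • (Matrix.toLin' A) = Matrix.toLin' (c • A) :=
  (map_smul (Matrix.toLin' :
    Matrix (Idx n m) (Idx n m) ℂ ≃ₗ[ℂ] Module.End ℂ (Idx n m → ℂ)) c A).symm

lemma tl_zero : (0 : Module.End ℂ (Idx n m → ℂ)) = Matrix.toLin' (0 : Matrix (Idx n m) (Idx n m) ℂ) :=
  (map_zero (Matrix.toLin' :
    Matrix (Idx n m) (Idx n m) ℂ ≃ₗ[ℂ] Module.End ℂ (Idx n m → ℂ))).symm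

lemma toLin'_single (M : Matrix (Idx n m) (Idx n m) ℂ) (p0 : Idx n m) :
    Matrix.toLin' M (Pi.single p0 1) = fun q => M q p0 := by
  funext q
  rw [Matrix.toLin'_apply]
  simp [Matrix.mulVec, dotProduct, Pi.single_apply, mul_ite, Finset.sum_ite_eq']

lemma pv_pOmega (h : m ≤ n) (k : Fin m) : pv (pOmega n m h) k = k.val + 1 := rfl

lemma xp_omega_mat (i r : ℕ) (hi : 1 ≤ i) (h : m ≤ n) (q : Idx n m) :
    xpMat n m hbar a i r q (pOmega n m h) = 0 := by
  rw [xpMat_apply]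
  refine Finset.sum_eq_zero fun k _ => if_neg fun hc => ?_
  have h2 := hc.1
  rw [pv_pOmega] at h2
  have him : i - 1 < m := by have := k.isLt; omega
  exact hc.not_occ_fst ⟨⟨i - 1, him⟩, by rw [pv_pOmega]; simp; omega⟩

lemma Dg_omega (i r : ℕ) (hi : 1 ≤ i) (hm1 : 1 ≤ m) (h : m ≤ n) :
    Dg n m hbar a i r (pOmega n m h) = if i = m then a ^ r else 0 := by
  by_cases him : i = m
  · have hkm : i - 1 < m := by omega
    have hk : pv (pOmega n m h) ⟨i - 1, hkm⟩ = i := by rw [pv_pOmega]; simp; omega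
    have hno : ¬ Occurs (pOmega n m h) (i + 1) := by
      rintro ⟨l, hl⟩
      rw [pv_pOmega] at hl
      have := l.isLt
      omega
    rw [Dg_pos hbar a hk hno, if_pos him]
    have hb : bval m hbar a i ((⟨i - 1, hkm⟩ : Fin m).val + 1) = a := by
      have hv : ((⟨i - 1, hkm⟩ : Fin m).val + 1 : ℕ) = i := by simp; omega
      rw [hv]
      unfold bval
      have hcast : (i : ℂ) = (m : ℂ) := by rw [him]
      rw [hcast]
      ring
    rw [hb]
  · rw [if_neg him]
    rcases lt_or_gt_of_ne him with hlt | hgt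
    · refine Dg_zero_both hbar a ⟨⟨i - 1, by omega⟩, ?_⟩ ⟨⟨i, by omega⟩, ?_⟩ r
      · rw [pv_pOmega]; simp; omega
      · rw [pv_pOmega]
    · refine Dg_zero_none hbar a ?_ ?_ r
      · rintro ⟨l, hl⟩; rw [pv_pOmega] at hl; have := l.isLt; omega
      · rintro ⟨l, hl⟩; rw [pv_pOmega] at hl; have := l.isLt; omega

end Infra
/-- The operators `ξ_{i,r}, x^±_{i,r}` satisfy the defining relations
(Y1)–(Y5) of the Yangian `Y_ħ(sl_n)`, and `Ω = |(1,…,m)⟩` is a highest-weight vector with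
`x⁺_{i,r}Ω = 0` and `ξ_{i,r}Ω = δ_{i,m}·a^r·Ω`. -/
theorem yangian_sln_fundamental_relations
    (n m : ℕ) (hn : 2 ≤ n) (hm₁ : 1 ≤ m) (hm₂ : m ≤ n - 1) (hbar a : ℂ) :
    (∀ i j : ℕ, 1 ≤ i → i ≤ n - 1 → 1 ≤ j → j ≤ n - 1 → ∀ r s : ℕ,
      -- (Y1)
      Xi n m hbar a i r * Xi n m hbar a j s = Xi n m hbar a j s * Xi n m hbar a i r ∧
      -- (Y2), both signs
      Xi n m hbar a i 0 * Xp n m hbar a j s - Xp n m hbar a j s * Xi n m hbar a i 0 =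
        cartan i j • Xp n m hbar a j s ∧
      Xi n m hbar a i 0 * Xm n m hbar a j s - Xm n m hbar a j s * Xi n m hbar a i 0 =
        (-(cartan i j)) • Xm n m hbar a j s ∧
      -- (Y3), both signs
      (Xi n m hbar a i (r + 1) * Xp n m hbar a j s -
            Xp n m hbar a j s * Xi n m hbar a i (r + 1)) -
          (Xi n m hbar a i r * Xp n m hbar a j (s + 1) -
            Xp n m hbar a j (s + 1) * Xi n m hbar a i r) =
        (hbar * cartan i j / 2) •
          (Xi n m hbar a i r * Xp n m hbar a j s + Xp n m hbar a j s * Xi n m hbar a i r) ∧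
      (Xi n m hbar a i (r + 1) * Xm n m hbar a j s -
            Xm n m hbar a j s * Xi n m hbar a i (r + 1)) -
          (Xi n m hbar a i r * Xm n m hbar a j (s + 1) -
            Xm n m hbar a j (s + 1) * Xi n m hbar a i r) =
        (-(hbar * cartan i j / 2)) •
          (Xi n m hbar a i r * Xm n m hbar a j s + Xm n m hbar a j s * Xi n m hbar a i r) ∧
      -- (Y4), both signs
      (Xp n m hbar a i (r + 1) * Xp n m hbar a j s -
            Xp n m hbar a j s * Xp n m hbar a i (r + 1)) -
          (Xp n m hbar a i r * Xp n m hbar a j (s + 1) -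
            Xp n m hbar a j (s + 1) * Xp n m hbar a i r) =
        (hbar * cartan i j / 2) •
          (Xp n m hbar a i r * Xp n m hbar a j s + Xp n m hbar a j s * Xp n m hbar a i r) ∧
      (Xm n m hbar a i (r + 1) * Xm n m hbar a j s -
            Xm n m hbar a j s * Xm n m hbar a i (r + 1)) -
          (Xm n m hbar a i r * Xm n m hbar a j (s + 1) -
            Xm n m hbar a j (s + 1) * Xm n m hbar a i r) =
        (-(hbar * cartan i j / 2)) •
          (Xm n m hbar a i r * Xm n m hbar a j s + Xm n m hbar a j s * Xm n m hbar a i r) ∧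
      -- (Y5)
      Xp n m hbar a i r * Xm n m hbar a j s - Xm n m hbar a j s * Xp n m hbar a i r =
        (if i = j then Xi n m hbar a i (r + s) else 0)) ∧
    (∀ i r : ℕ, 1 ≤ i → i ≤ n - 1 →
      Xp n m hbar a i r (Omega n m (le_trans hm₂ (Nat.sub_le n 1))) = 0) ∧
    (∀ i r : ℕ, 1 ≤ i → i ≤ n - 1 →
      Xi n m hbar a i r (Omega n m (le_trans hm₂ (Nat.sub_le n 1))) =
        (if i = m then a ^ r else 0) • Omega n m (le_trans hm₂ (Nat.sub_le n 1))) := by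
  have hmn : m ≤ n := le_trans hm₂ (Nat.sub_le n 1)
  refine ⟨?_, ?_, ?_⟩
  · intro i j hi hin hj hjn r s
    have hinn : i < n := by omega
    refine ⟨?_, ?_, ?_, ?_, ?_, ?_, ?_, ?_⟩
    · unfold Xi
      rw [tl_mul, tl_mul]
      exact congrArg _ (Y1_mat hbar a i j r s)
    · unfold Xi Xp
      rw [tl_mul, tl_mul, tl_sub, tl_smul]
      exact congrArg _ (Y2p_mat hbar a i j hi s)
    · unfold Xi Xm
      rw [tl_mul, tl_mul, tl_sub, tl_smul]
      exact congrArg _ (Y2m_mat hbar a i j hi s)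
    · unfold Xi Xp
      rw [tl_mul, tl_mul, tl_mul, tl_mul, tl_mul, tl_mul, tl_sub, tl_sub, tl_sub,
        tl_add, tl_smul]
      exact congrArg _ (Y3p_mat hbar a i j hi r s)
    · unfold Xi Xm
      rw [tl_mul, tl_mul, tl_mul, tl_mul, tl_mul, tl_mul, tl_sub, tl_sub, tl_sub,
        tl_add, tl_smul]
      exact congrArg _ (Y3m_mat hbar a i j hi r s)
    · unfold Xp
      rw [tl_mul, tl_mul, tl_mul, tl_mul, tl_mul, tl_mul, tl_sub, tl_sub, tl_sub,
        tl_add, tl_smul]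
      exact congrArg _ (Y4p_mat hbar a i j hi hj r s)
    · unfold Xm
      rw [tl_mul, tl_mul, tl_mul, tl_mul, tl_mul, tl_mul, tl_sub, tl_sub, tl_sub,
        tl_add, tl_smul]
      exact congrArg _ (Y4m_mat hbar a i j hi hj r s)
    · by_cases hij : i = j
      · subst hij
        rw [if_pos rfl]
        unfold Xp Xm Xi
        rw [tl_mul, tl_mul, tl_sub]
        refine congrArg _ ?_
        have h5 := Y5_mat (n := n) (m := m) hbar a i i hi hinn r s
        rwa [if_pos rfl] at h5
      · rw [if_neg hij]
        unfold Xp Xm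
        rw [tl_mul, tl_mul, tl_sub, tl_zero]
        refine congrArg _ ?_
        have h5 := Y5_mat (n := n) (m := m) hbar a i j hi hinn r s
        rwa [if_neg hij] at h5
  · intro i r hi hin
    unfold Xp Omega
    rw [toLin'_single]
    funext q
    exact xp_omega_mat hbar a i r hi _ q
  · intro i r hi hin
    unfold Xi Omega
    rw [toLin'_single]
    funext q
    rw [xiMat_eq_diagonal, Matrix.diagonal_apply, Pi.smul_apply, Pi.single_apply,
      smul_eq_mul]
    by_cases hq : q = pOmega n m (le_trans hm₂ (Nat.sub_le n 1))
    · rw [if_pos hq, if_pos hq, hq, Dg_omega hbar a i r hi hm₁, mul_one]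
    · rw [if_neg hq, if_neg hq, mul_zero]

end YangianSlnFund

end
end

section
/- Fix a nonzero complex number ħ. Let p ≥ 1 be an integer, a_1, …, a_p ∈ ℂ, and r_1, …, r_p nonnegative integers. Set N(u) := Π_{k=1}^p (u − a_k − ħ)(u − a_k + r_k·ħ), and for each tuple s = (s_1, …, s_p) of integers with 0 ≤ s_k ≤ r_k set D_s(u) := Π_{k=1}^p (u − a_k + (s_k − 1)ħ)(u − a_k + s_k·ħ). Then for every index 1 ≤ k ≤ p and every integer t with 0 ≤ t ≤ r_k − 1, there exists such a tuple s for which the point z = a_k − tħ is a pole of the rational function N(u)/D_s(u); that is, the multiplicity of z as a root of the polynomial D_s strictly exceeds the multiplicity of z as a root of the polynomial N. -/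
open Polynomial

lemma aux_prod_rootMult {p : ℕ} (z : ℂ) (f : Fin p → ℂ[X]) (hf : ∀ i, f i ≠ 0) :
    (∏ i, f i).rootMultiplicity z = ∑ i, (f i).rootMultiplicity z := by
  classical
  have hne : (∏ i, f i) ≠ 0 := Finset.prod_ne_zero_iff.2 fun i _ => hf i
  rw [← count_roots, roots_prod f Finset.univ hne, Multiset.count_bind]
  simp only [← count_roots]
  rfl

lemma aux_quad_rootMult (z α β : ℂ) :
    ((X - C α) * (X - C β)).rootMultiplicity z =
      (if z = α then 1 else 0) + (if z = β then 1 else 0) := by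
  classical
  rw [rootMultiplicity_mul (mul_ne_zero (X_sub_C_ne_zero α) (X_sub_C_ne_zero β)),
    rootMultiplicity_X_sub_C, rootMultiplicity_X_sub_C]

/-- For each `k` and `0 ≤ t ≤ r_k − 1` there is a tuple `s` (with
`0 ≤ s_k ≤ r_k`) such that `z = a_k − tħ` is a pole of `N(u)/D_s(u)`: the multiplicity of
`z` as a root of `D_s` strictly exceeds its multiplicity as a root of `N`. -/
theorem exists_tuple_pole_of_eigenvalue
    (hbar : ℂ) (hhbar : hbar ≠ 0) (p : ℕ) (hp : 1 ≤ p) (a : Fin p → ℂ) (r : Fin p → ℕ) :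
    ∀ (k : Fin p) (t : ℕ), t < r k →
      ∃ s : Fin p → ℕ, (∀ k' : Fin p, s k' ≤ r k') ∧
        (∏ k' : Fin p,
            ((X - C (a k' + hbar)) * (X - C (a k' - (r k' : ℂ) * hbar)))).rootMultiplicity
              (a k - (t : ℂ) * hbar) <
          (∏ k' : Fin p,
              ((X - C (a k' - ((s k' : ℂ) - 1) * hbar)) *
                (X - C (a k' - (s k' : ℂ) * hbar)))).rootMultiplicity
            (a k - (t : ℂ) * hbar) := by
  classical
  intro k t ht
  set z : ℂ := a k - (t : ℂ) * hbar with hz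
  refine ⟨fun k' => if k' = k then t else
    (if z = a k' - (r k' : ℂ) * hbar then r k' else 0), ?_, ?_⟩
  · intro k'
    dsimp only
    split_ifs with h1 h2
    · exact h1 ▸ ht.le
    · exact le_rfl
    · exact Nat.zero_le _
  · rw [aux_prod_rootMult _ _ (fun i => mul_ne_zero (X_sub_C_ne_zero _) (X_sub_C_ne_zero _)),
      aux_prod_rootMult _ _ (fun i => mul_ne_zero (X_sub_C_ne_zero _) (X_sub_C_ne_zero _))]
    simp only [aux_quad_rootMult]
    apply Finset.sum_lt_sum
    · intro i _
      by_cases hik : i = k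
      · subst hik
        have h1 : ¬ z = a i + hbar := by
          intro h
          rw [hz] at h
          have : ((t : ℂ) + 1) * hbar = 0 := by linear_combination -h
          rcases mul_eq_zero.1 this with h' | h'
          · exact Nat.cast_add_one_ne_zero t h'
          · exact hhbar h'
        have h2 : ¬ z = a i - (r i : ℂ) * hbar := by
          intro h
          rw [hz] at h
          have : (t : ℂ) = (r i : ℂ) := mul_right_cancel₀ hhbar (by linear_combination -h)
          have : t = r i := by exact_mod_cast this
          omega
        simp [h1, h2]
      · simp only [if_neg hik]
        by_cases h2 : z = a i - (r i : ℂ) * hbar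
        · have h1 : ¬ z = a i + hbar := by
            intro h
            have : ((r i : ℂ) + 1) * hbar = 0 := by
              rw [h2] at h; linear_combination -h
            rcases mul_eq_zero.1 this with h' | h'
            · exact Nat.cast_add_one_ne_zero (r i) h'
            · exact hhbar h'
          simp only [if_pos h2, if_neg h1, if_pos h2]
          split_ifs <;> omega
        · simp only [if_neg h2]
          push_cast
          simp only [Nat.cast_zero, zero_sub, sub_zero]
          have : a i - (-1 : ℂ) * hbar = a i + hbar := by ring
          rw [this]
          split_ifs <;> omega
    · refine ⟨k, Finset.mem_univ k, ?_⟩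
      have h1 : ¬ z = a k + hbar := by
        intro h
        rw [hz] at h
        have : ((t : ℂ) + 1) * hbar = 0 := by linear_combination -h
        rcases mul_eq_zero.1 this with h' | h'
        · exact Nat.cast_add_one_ne_zero t h'
        · exact hhbar h'
      have h2 : ¬ z = a k - (r k : ℂ) * hbar := by
        intro h
        rw [hz] at h
        have : (t : ℂ) = (r k : ℂ) := mul_right_cancel₀ hhbar (by linear_combination -h)
        have : t = r k := by exact_mod_cast this
        omega
      simp only [if_pos rfl, if_neg h1, if_neg h2]
      have h3 : z = a k - (t : ℂ) * hbar := hz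
      simp [h3]
end
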